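/- (Lemma 1, part 1) Suppose (t*, λ*) with λ* ≥ 0 maximizes k(t,λ) := (Δ+1)λmin(D(t,λ)) − t − λc over t ∈ ℝ, λ ≥ 0, and let i be the multiplicity of λmin(A). If λmin(D(t*,λ*)) < λmin(A), then λmin(D(t*,λ*)) is a simple eigenvalue of D(t*,λ*); otherwise (i.e., when λmin(D(t*,λ*)) = λmin(A)), λmin(D(t*,λ*)) has multiplicity i + 1 as an eigenvalue of D(t*,λ*). -/

import Mathlib

open Matrix

/-- The smallest eigenvalue of a real (symmetric) matrix. -/
noncomputable def lambdaMin {ι : Type} [Fintype ι] (M : Matrix ι ι ℝ) : ℝ :=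
  sInf {μ : ℝ | ∃ v : ι → ℝ, v ≠ 0 ∧ M.mulVec v = μ • v}

/-- The multiplicity of the smallest eigenvalue: the dimension of Null(M - λmin(M)·I). -/
noncomputable def eigMult {ι : Type} [Fintype ι] [DecidableEq ι] (M : Matrix ι ι ℝ) : ℕ :=
  Module.finrank ℝ (LinearMap.ker (M - lambdaMin M • (1 : Matrix ι ι ℝ)).mulVecLin)

/-- The bordered matrix D(t) = [[t, -aᵀ],[-a, A]]. -/
noncomputable def borderD {n : ℕ} (A : Matrix (Fin n) (Fin n) ℝ) (a : Fin n → ℝ) (t : ℝ) :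
    Matrix (Unit ⊕ Fin n) (Unit ⊕ Fin n) ℝ :=
  Matrix.fromBlocks (Matrix.of fun (_ : Unit) (_ : Unit) => t)
    (Matrix.of fun (_ : Unit) (j : Fin n) => -a j)
    (Matrix.of fun (i : Fin n) (_ : Unit) => -a i) A

/-- The bordered matrix D(t,λ) = [[t, (-a + (λ/2)b)ᵀ],[-a + (λ/2)b, A]]. -/
noncomputable def borderD2 {n : ℕ} (A : Matrix (Fin n) (Fin n) ℝ) (a b : Fin n → ℝ)
    (t l : ℝ) : Matrix (Unit ⊕ Fin n) (Unit ⊕ Fin n) ℝ :=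
  borderD A (fun j => a j - (l / 2) * b j) t

/-- The objective xᵀAx - 2aᵀx. -/
noncomputable def objQ {n : ℕ} (A : Matrix (Fin n) (Fin n) ℝ) (a : Fin n → ℝ)
    (x : Fin n → ℝ) : ℝ :=
  x ⬝ᵥ A.mulVec x - 2 * (a ⬝ᵥ x)

/-- The optimal value p* of eTRS. -/
noncomputable def pstar {n : ℕ} (A : Matrix (Fin n) (Fin n) ℝ) (a b : Fin n → ℝ)
    (c Δ : ℝ) : ℝ :=
  sInf {v : ℝ | ∃ x : Fin n → ℝ, x ⬝ᵥ x ≤ Δ ∧ b ⬝ᵥ x ≤ c ∧ v = objQ A a x}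

/-- The Lagrangian of eTRS. -/
noncomputable def lagr {n : ℕ} (A : Matrix (Fin n) (Fin n) ℝ) (a b : Fin n → ℝ)
    (c Δ : ℝ) (x : Fin n → ℝ) (l1 l2 : ℝ) : ℝ :=
  objQ A a x + l1 * (x ⬝ᵥ x - Δ) + l2 * (b ⬝ᵥ x - c)

/-- The Lagrangian dual value d* of eTRS:
the supremum over λ1, λ2 ≥ 0 of inf_x of the Lagrangian, encoded as the supremum of all
values that are lower bounds of the Lagrangian for some admissible multipliers. -/
noncomputable def dstar {n : ℕ} (A : Matrix (Fin n) (Fin n) ℝ) (a b : Fin n → ℝ)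
    (c Δ : ℝ) : ℝ :=
  sSup {v : ℝ | ∃ l1 l2 : ℝ, 0 ≤ l1 ∧ 0 ≤ l2 ∧ ∀ x : Fin n → ℝ, v ≤ lagr A a b c Δ x l1 l2}

/-- x is a global optimal solution of eTRS. -/
def isOptimal {n : ℕ} (A : Matrix (Fin n) (Fin n) ℝ) (a b : Fin n → ℝ)
    (c Δ : ℝ) (x : Fin n → ℝ) : Prop :=
  x ⬝ᵥ x ≤ Δ ∧ b ⬝ᵥ x ≤ c ∧
    ∀ y : Fin n → ℝ, y ⬝ᵥ y ≤ Δ → b ⬝ᵥ y ≤ c → objQ A a x ≤ objQ A a y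

/-- The dual objective k(t,λ) = (Δ+1)·λmin(D(t,λ)) - t - λc. -/
noncomputable def ktl {n : ℕ} (A : Matrix (Fin n) (Fin n) ℝ) (a b : Fin n → ℝ)
    (c Δ : ℝ) (t l : ℝ) : ℝ :=
  (Δ + 1) * lambdaMin (borderD2 A a b t l) - t - l * c

set_option linter.unusedSectionVars false
set_option linter.unusedVariables false

section spec
variable {ι : Type} [Fintype ι] [DecidableEq ι]

lemma diag_real {M : Matrix ι ι ℝ} (hM : M.IsHermitian) :
    star (hM.eigenvectorUnitary : Matrix ι ι ℝ) * M * (hM.eigenvectorUnitary : Matrix ι ι ℝ)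
      = diagonal hM.eigenvalues := by
  have := hM.conjStarAlgAut_star_eigenvectorUnitary
  rw [Unitary.conjStarAlgAut_star_apply] at this
  simpa using this

lemma UstarU {M : Matrix ι ι ℝ} (hM : M.IsHermitian) :
    star (hM.eigenvectorUnitary : Matrix ι ι ℝ) * (hM.eigenvectorUnitary : Matrix ι ι ℝ) = 1 :=
  Unitary.coe_star_mul_self _

lemma UUstar {M : Matrix ι ι ℝ} (hM : M.IsHermitian) :
    (hM.eigenvectorUnitary : Matrix ι ι ℝ) * star (hM.eigenvectorUnitary : Matrix ι ι ℝ) = 1 :=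
  Unitary.coe_mul_star_self _

lemma UstarM {M : Matrix ι ι ℝ} (hM : M.IsHermitian) :
    star (hM.eigenvectorUnitary : Matrix ι ι ℝ) * M
      = diagonal hM.eigenvalues * star (hM.eigenvectorUnitary : Matrix ι ι ℝ) := by
  calc star (hM.eigenvectorUnitary : Matrix ι ι ℝ) * M
      = (star (hM.eigenvectorUnitary : Matrix ι ι ℝ) * M * hM.eigenvectorUnitary)
          * star (hM.eigenvectorUnitary : Matrix ι ι ℝ) := by
        rw [mul_assoc, UUstar hM, mul_one]
    _ = _ := by rw [diag_real hM]

lemma specAux_eq {M : Matrix ι ι ℝ} (hM : M.IsHermitian) :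
    {μ : ℝ | ∃ v : ι → ℝ, v ≠ 0 ∧ M.mulVec v = μ • v} = Set.range hM.eigenvalues := by
  ext μ
  constructor
  · rintro ⟨v, hv, hMv⟩
    set U : Matrix ι ι ℝ := (hM.eigenvectorUnitary : Matrix ι ι ℝ) with hU
    set c : ι → ℝ := star U *ᵥ v with hc
    have hvc : U *ᵥ c = v := by
      rw [hc, mulVec_mulVec, UUstar hM, one_mulVec]
    have hcne : c ≠ 0 := by
      intro h
      rw [h, mulVec_zero] at hvc
      exact hv hvc.symm
    obtain ⟨i, hi⟩ := Function.ne_iff.mp hcne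
    have key : diagonal hM.eigenvalues *ᵥ c = μ • c := by
      rw [hc, mulVec_mulVec, ← UstarM hM, ← mulVec_mulVec, hMv, mulVec_smul]
    have h2 := congrFun key i
    simp only [Pi.smul_apply, smul_eq_mul, mulVec_diagonal] at h2
    have hi' : c i ≠ 0 := hi
    exact ⟨i, mul_right_cancel₀ hi' h2⟩
  · rintro ⟨i, rfl⟩
    exact ⟨_, (WithLp.ofLp_eq_zero 2).ne.2 <| hM.eigenvectorBasis.orthonormal.ne_zero i, hM.mulVec_eigenvectorBasis i⟩
end spec

section spec2
variable {ι : Type} [Fintype ι] [DecidableEq ι] [Nonempty ι]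

lemma lambdaMin_le_eig {M : Matrix ι ι ℝ} (hM : M.IsHermitian) {μ : ℝ} {v : ι → ℝ}
    (hv : v ≠ 0) (hMv : M.mulVec v = μ • v) : lambdaMin M ≤ μ := by
  unfold lambdaMin
  rw [specAux_eq hM]
  refine csInf_le (Set.finite_range _).bddBelow ?_
  rw [← specAux_eq hM]
  exact ⟨v, hv, hMv⟩

lemma lambdaMin_mem {M : Matrix ι ι ℝ} (hM : M.IsHermitian) :
    ∃ v : ι → ℝ, v ≠ 0 ∧ M.mulVec v = lambdaMin M • v := by
  have h : lambdaMin M ∈ {μ : ℝ | ∃ v : ι → ℝ, v ≠ 0 ∧ M.mulVec v = μ • v} := by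
    unfold lambdaMin
    rw [specAux_eq hM]
    exact (Set.range_nonempty _).csInf_mem (Set.finite_range _)
  exact h

lemma lambdaMin_le_eigenvalues {M : Matrix ι ι ℝ} (hM : M.IsHermitian) (i : ι) :
    lambdaMin M ≤ hM.eigenvalues i :=
  lambdaMin_le_eig hM ((WithLp.ofLp_eq_zero 2).ne.2 <| hM.eigenvectorBasis.orthonormal.ne_zero i) (hM.mulVec_eigenvectorBasis i)

/-- coordinates of v in the eigenbasis -/
lemma coord_decomp {M : Matrix ι ι ℝ} (hM : M.IsHermitian) (v : ι → ℝ) :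
    (hM.eigenvectorUnitary : Matrix ι ι ℝ) *ᵥ (star (hM.eigenvectorUnitary : Matrix ι ι ℝ) *ᵥ v)
      = v := by
  rw [mulVec_mulVec, UUstar hM, one_mulVec]

lemma coord_decomp2 {M : Matrix ι ι ℝ} (hM : M.IsHermitian) (v : ι → ℝ) :
    star (hM.eigenvectorUnitary : Matrix ι ι ℝ) *ᵥ ((hM.eigenvectorUnitary : Matrix ι ι ℝ) *ᵥ v)
      = v := by
  rw [mulVec_mulVec, UstarU hM, one_mulVec]

lemma MU_eq {M : Matrix ι ι ℝ} (hM : M.IsHermitian) :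
    M * (hM.eigenvectorUnitary : Matrix ι ι ℝ)
      = (hM.eigenvectorUnitary : Matrix ι ι ℝ) * diagonal hM.eigenvalues := by
  calc M * (hM.eigenvectorUnitary : Matrix ι ι ℝ)
      = (hM.eigenvectorUnitary : Matrix ι ι ℝ) *
        (star (hM.eigenvectorUnitary : Matrix ι ι ℝ) * M
          * (hM.eigenvectorUnitary : Matrix ι ι ℝ)) := by
        rw [← mul_assoc, ← mul_assoc, UUstar hM, one_mul]
    _ = _ := by rw [diag_real hM]

lemma dot_eq_sum_coord {M : Matrix ι ι ℝ} (hM : M.IsHermitian) (v w : ι → ℝ) :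
    v ⬝ᵥ w = (star (hM.eigenvectorUnitary : Matrix ι ι ℝ) *ᵥ v) ⬝ᵥ
      (star (hM.eigenvectorUnitary : Matrix ι ι ℝ) *ᵥ w) := by
  set U : Matrix ι ι ℝ := (hM.eigenvectorUnitary : Matrix ι ι ℝ) with hU
  have hsU : star U = Uᵀ := by
    rw [show star U = Uᴴ from rfl, conjTranspose_eq_transpose_of_trivial]
  calc v ⬝ᵥ w = (v ᵥ* (U * Uᵀ)) ⬝ᵥ w := by rw [← hsU, UUstar hM, vecMul_one]
    _ = ((v ᵥ* U) ᵥ* Uᵀ) ⬝ᵥ w := by rw [vecMul_vecMul]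
    _ = (v ᵥ* U) ⬝ᵥ (Uᵀ *ᵥ w) := by rw [dotProduct_mulVec]
    _ = _ := by rw [hsU, mulVec_transpose, mulVec_transpose]

lemma quad_eq_sum {M : Matrix ι ι ℝ} (hM : M.IsHermitian) (v : ι → ℝ) :
    v ⬝ᵥ M *ᵥ v = ∑ i, hM.eigenvalues i *
      ((star (hM.eigenvectorUnitary : Matrix ι ι ℝ) *ᵥ v) i)^2 := by
  set U : Matrix ι ι ℝ := (hM.eigenvectorUnitary : Matrix ι ι ℝ) with hU
  set c : ι → ℝ := star U *ᵥ v with hc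
  have h1 : U *ᵥ (diagonal hM.eigenvalues *ᵥ c) = M *ᵥ v := by
    rw [hc, mulVec_mulVec, mulVec_mulVec, ← MU_eq hM, mul_assoc, UUstar hM, mul_one]
  rw [← h1, dot_eq_sum_coord hM v, coord_decomp2 hM, ← hc]
  simp only [dotProduct, mulVec_diagonal]
  exact Finset.sum_congr rfl fun i _ => by ring

lemma normsq_eq_sum {M : Matrix ι ι ℝ} (hM : M.IsHermitian) (v : ι → ℝ) :
    v ⬝ᵥ v = ∑ i, ((star (hM.eigenvectorUnitary : Matrix ι ι ℝ) *ᵥ v) i)^2 := by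
  rw [dot_eq_sum_coord hM v v]
  simp [dotProduct, sq]

lemma rayleigh_le {M : Matrix ι ι ℝ} (hM : M.IsHermitian) (v : ι → ℝ) :
    lambdaMin M * (v ⬝ᵥ v) ≤ v ⬝ᵥ M *ᵥ v := by
  rw [quad_eq_sum hM v, normsq_eq_sum hM v, Finset.mul_sum]
  apply Finset.sum_le_sum
  intro i _
  exact mul_le_mul_of_nonneg_right (lambdaMin_le_eigenvalues hM i) (sq_nonneg _)

end spec2

section border
variable {n : ℕ} (A : Matrix (Fin n) (Fin n) ℝ) (a' : Fin n → ℝ) (t : ℝ)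

lemma borderD_isHermitian (hA : A.IsHermitian) : (borderD A a' t).IsHermitian := by
  refine Matrix.IsHermitian.fromBlocks ?_ ?_ hA
  · ext i j; simp [conjTranspose]
  · ext i j; simp [conjTranspose]

lemma mem_eigKer {ι : Type} [Fintype ι] [DecidableEq ι] {M : Matrix ι ι ℝ} {μ : ℝ} {v : ι → ℝ} :
    v ∈ LinearMap.ker (M - μ • (1 : Matrix ι ι ℝ)).mulVecLin ↔ M.mulVec v = μ • v := by
  rw [LinearMap.mem_ker, mulVecLin_apply, sub_mulVec, smul_mulVec, one_mulVec, sub_eq_zero]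

lemma dot_sum_split (v w : Unit ⊕ Fin n → ℝ) :
    v ⬝ᵥ w = v (Sum.inl ()) * w (Sum.inl ()) + (v ∘ Sum.inr) ⬝ᵥ (w ∘ Sum.inr) := by
  simp [dotProduct, Fintype.sum_sum_type]

lemma borderD_mulVec_inl (v : Unit ⊕ Fin n → ℝ) :
    ((borderD A a' t) *ᵥ v) (Sum.inl ()) = t * v (Sum.inl ()) - a' ⬝ᵥ (v ∘ Sum.inr) := by
  simp [borderD, mulVec, dotProduct, Fintype.sum_sum_type, sub_eq_add_neg, Finset.sum_neg_distrib]

lemma borderD_mulVec_inr (v : Unit ⊕ Fin n → ℝ) (i : Fin n) :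
    ((borderD A a' t) *ᵥ v) (Sum.inr i) = -(a' i) * v (Sum.inl ()) + (A *ᵥ (v ∘ Sum.inr)) i := by
  simp [borderD, mulVec, dotProduct, Fintype.sum_sum_type]

lemma borderD_quad (v : Unit ⊕ Fin n → ℝ) :
    v ⬝ᵥ (borderD A a' t) *ᵥ v = t * (v (Sum.inl ()))^2
      - 2 * (v (Sum.inl ())) * (a' ⬝ᵥ (v ∘ Sum.inr))
      + (v ∘ Sum.inr) ⬝ᵥ (A *ᵥ (v ∘ Sum.inr)) := by
  rw [dot_sum_split, borderD_mulVec_inl]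
  have h2 : ((borderD A a' t *ᵥ v) ∘ Sum.inr)
      = (-(v (Sum.inl ()))) • a' + A *ᵥ (v ∘ Sum.inr) := by
    funext i
    simp [borderD_mulVec_inr]
    ring
  rw [h2, dotProduct_add, dotProduct_smul]
  have : (v ∘ Sum.inr) ⬝ᵥ a' = a' ⬝ᵥ (v ∘ Sum.inr) := dotProduct_comm _ _
  rw [this]
  ring_nf

end border

section main
variable {n : ℕ} {A : Matrix (Fin n) (Fin n) ℝ}

lemma part1 (hn : 1 ≤ n) (hA : A.IsHermitian) (a' : Fin n → ℝ) (t : ℝ)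
    (hlt : lambdaMin (borderD A a' t) < lambdaMin A) :
    Module.finrank ℝ (LinearMap.ker
      ((borderD A a' t) - lambdaMin (borderD A a' t) • 1).mulVecLin) = 1 := by
  haveI : Nonempty (Fin n) := ⟨⟨0, hn⟩⟩
  set D := borderD A a' t with hDdef
  have hD : D.IsHermitian := borderD_isHermitian A a' t hA
  set μ := lambdaMin D with hμ
  set K := LinearMap.ker (D - μ • 1).mulVecLin with hK
  have hiq : ∀ v : Unit ⊕ Fin n → ℝ, v ∈ K → v (Sum.inl ()) = 0 → v = 0 := by
    intro v hv h0
    have hv' : D *ᵥ v = μ • v := mem_eigKer.mp hv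
    have htail : A *ᵥ (v ∘ Sum.inr) = μ • (v ∘ Sum.inr) := by
      funext i
      have := congrFun hv' (Sum.inr i)
      rw [hDdef, borderD_mulVec_inr, h0] at this
      simpa using this
    have htz : v ∘ Sum.inr = 0 := by
      by_contra hne
      exact absurd (lambdaMin_le_eig hA hne htail) (not_le.mpr hlt)
    funext j
    cases j with
    | inl u => cases u; exact h0
    | inr i => exact congrFun htz i
  -- upper bound
  have hub : Module.finrank ℝ K ≤ 1 := by
    let f : K →ₗ[ℝ] ℝ := (LinearMap.proj (Sum.inl ())).comp K.subtype
    have hfinj : Function.Injective f := by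
      rw [injective_iff_map_eq_zero]
      intro x hx
      exact Subtype.ext (hiq x.1 x.2 hx)
    simpa using f.finrank_le_finrank_of_injective hfinj
  -- lower bound
  obtain ⟨w, hw0, hww⟩ := lambdaMin_mem hD
  have hlb : 0 < Module.finrank ℝ K :=
    Module.finrank_pos_iff_exists_ne_zero.mpr
      ⟨⟨w, mem_eigKer.mpr hww⟩, fun h => hw0 (by simpa using congrArg Subtype.val h)⟩
  omega

end main

section main2
variable {n : ℕ} {A : Matrix (Fin n) (Fin n) ℝ}

lemma orth_of_eq (hn : 1 ≤ n) (hA : A.IsHermitian) (a' : Fin n → ℝ) (t : ℝ)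
    (heq : lambdaMin (borderD A a' t) = lambdaMin A)
    {q : Fin n → ℝ} (hq : A *ᵥ q = lambdaMin A • q) : a' ⬝ᵥ q = 0 := by
  haveI : Nonempty (Fin n) := ⟨⟨0, hn⟩⟩
  by_contra hγ
  set μ := lambdaMin A with hμ
  set γ := a' ⬝ᵥ q with hγdef
  have hqne : q ≠ 0 := by
    intro h; apply hγ; rw [hγdef, h, dotProduct_zero]
  have hQpos : 0 < q ⬝ᵥ q := by
    rcases lt_or_eq_of_le (Finset.sum_nonneg fun i _ => mul_self_nonneg (q i)) with h | h
    · exact h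
    · exact absurd (dotProduct_self_eq_zero.mp h.symm) hqne
  set ε : ℝ := min 1 (1 / (|t - μ| + 1)) with hε
  have habs : 0 < |t - μ| + 1 := by positivity
  have hεpos : 0 < ε := lt_min one_pos (by positivity)
  have hεsmall : ε * (t - μ) < 2 := by
    have h1 : ε * (t - μ) ≤ ε * |t - μ| := by
      apply mul_le_mul_of_nonneg_left (le_abs_self _) hεpos.le
    have h2 : ε * |t - μ| ≤ (1 / (|t - μ| + 1)) * |t - μ| := by
      apply mul_le_mul_of_nonneg_right (min_le_right _ _) (abs_nonneg _)
    have h3 : (1 / (|t - μ| + 1)) * |t - μ| < 1 := by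
      rw [div_mul_eq_mul_div, div_lt_one habs]
      linarith
    linarith
  set v : Unit ⊕ Fin n → ℝ := Sum.elim (fun _ => ε * γ) q with hv
  have hvinl : v (Sum.inl ()) = ε * γ := rfl
  have hvinr : v ∘ Sum.inr = q := rfl
  have hquad := borderD_quad A a' t v
  rw [hvinl, hvinr, hq, dotProduct_smul, smul_eq_mul, ← hγdef] at hquad
  have hray := rayleigh_le (borderD_isHermitian A a' t hA) v
  rw [heq, dot_sum_split, hvinl, hvinr, hquad] at hray
  have hγsq : 0 < γ ^ 2 := by positivity
  have key : 0 < (ε * γ ^ 2) * (2 - ε * (t - μ)) :=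
    mul_pos (mul_pos hεpos hγsq) (by linarith)
  nlinarith [hray, key]

end main2

section main3
variable {n : ℕ} {A : Matrix (Fin n) (Fin n) ℝ}

lemma gap_lemma (hA : A.IsHermitian) (a' : Fin n → ℝ) (t : ℝ)
    (hall : ∀ w : Unit ⊕ Fin n → ℝ, (borderD A a' t) *ᵥ w = lambdaMin (borderD A a' t) • w →
      w (Sum.inl ()) = 0) :
    ∃ s : ℝ, 0 < s ∧ lambdaMin (borderD A a' t) ≤ lambdaMin (borderD A a' (t - s)) := by
  classical
  set D := borderD A a' t with hDdef
  have hD : D.IsHermitian := borderD_isHermitian A a' t hA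
  set μ := lambdaMin D with hμ
  set U : Matrix (Unit ⊕ Fin n) (Unit ⊕ Fin n) ℝ :=
    (hD.eigenvectorUnitary : Matrix (Unit ⊕ Fin n) (Unit ⊕ Fin n) ℝ) with hU
  set lam := hD.eigenvalues with hlam
  have hBzero : ∀ j, lam j = μ → U (Sum.inl ()) j = 0 := by
    intro j hj
    have h := hD.mulVec_eigenvectorBasis j
    rw [← hlam, hj] at h
    exact hall _ h
  have hsum1 : ∑ j, (U (Sum.inl ()) j)^2 = 1 := by
    have h := congrFun (congrFun (UUstar hD) (Sum.inl ())) (Sum.inl ())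
    rw [mul_apply] at h
    have hone : (1 : Matrix (Unit ⊕ Fin n) (Unit ⊕ Fin n) ℝ) (Sum.inl ()) (Sum.inl ()) = 1 :=
      Matrix.one_apply_eq _
    rw [hone] at h
    rw [← h]
    apply Finset.sum_congr rfl
    intro j _
    have : (star U) j (Sum.inl ()) = U (Sum.inl ()) j := rfl
    rw [this, sq]
  set T : Finset (Unit ⊕ Fin n) := Finset.univ.filter (fun j => lam j = μ) with hT
  have hTmem : ∀ j, j ∈ T ↔ lam j = μ := by
    intro j; simp [hT]
  have hTc : Tᶜ.Nonempty := by
    by_contra h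
    rw [Finset.not_nonempty_iff_eq_empty, ← Finset.compl_univ, compl_inj_iff] at h
    have : ∑ j, (U (Sum.inl ()) j)^2 = 0 := by
      apply Finset.sum_eq_zero
      intro j _
      have hj : lam j = μ := (hTmem j).mp (h ▸ Finset.mem_univ j)
      rw [hBzero j hj]; ring
    rw [this] at hsum1; norm_num at hsum1
  set μ' := Tᶜ.inf' hTc lam with hμ'
  have hμ'gt : μ < μ' := by
    obtain ⟨j₀, hj₀, hj₀eq⟩ := Finset.exists_mem_eq_inf' hTc lam
    have h1 : lam j₀ ≠ μ := by
      intro h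
      exact (Finset.mem_compl.mp hj₀) ((hTmem j₀).mpr h)
    have h2 : μ ≤ lam j₀ := lambdaMin_le_eigenvalues hD j₀
    rw [hμ', hj₀eq]
    exact lt_of_le_of_ne h2 (Ne.symm h1)
  set s := μ' - μ with hs
  refine ⟨s, by linarith, ?_⟩
  have hkey : ∀ v : Unit ⊕ Fin n → ℝ, μ * (v ⬝ᵥ v) ≤ v ⬝ᵥ (borderD A a' (t - s)) *ᵥ v := by
    intro v
    set c : Unit ⊕ Fin n → ℝ := star U *ᵥ v with hc
    have h1 : v ⬝ᵥ D *ᵥ v = ∑ j, lam j * (c j)^2 := quad_eq_sum hD v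
    have h2 : v ⬝ᵥ v = ∑ j, (c j)^2 := normsq_eq_sum hD v
    have hquad' : v ⬝ᵥ (borderD A a' (t - s)) *ᵥ v
        = v ⬝ᵥ D *ᵥ v - s * (v (Sum.inl ()))^2 := by
      rw [hDdef, borderD_quad, borderD_quad]; ring
    have hv0 : v (Sum.inl ()) = ∑ j ∈ Tᶜ, U (Sum.inl ()) j * c j := by
      have h3 : v (Sum.inl ()) = ∑ j, U (Sum.inl ()) j * c j := by
        conv_lhs => rw [← coord_decomp hD v]
        rfl
      rw [h3]
      exact (Finset.sum_subset (Finset.subset_univ _) (fun x _ hx => by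
        rw [hBzero x ((hTmem x).mp (by simpa using hx))]; ring)).symm
    have hCS : (v (Sum.inl ()))^2 ≤ ∑ j ∈ Tᶜ, (c j)^2 := by
      rw [hv0]
      calc (∑ j ∈ Tᶜ, U (Sum.inl ()) j * c j)^2
          ≤ (∑ j ∈ Tᶜ, (U (Sum.inl ()) j)^2) * (∑ j ∈ Tᶜ, (c j)^2) :=
            Finset.sum_mul_sq_le_sq_mul_sq _ _ _
        _ ≤ 1 * (∑ j ∈ Tᶜ, (c j)^2) := by
            apply mul_le_mul_of_nonneg_right _ (Finset.sum_nonneg fun j _ => sq_nonneg _)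
            rw [← hsum1]
            exact Finset.sum_le_sum_of_subset_of_nonneg (Finset.subset_univ _)
              (fun j _ _ => sq_nonneg _)
        _ = _ := one_mul _
    have hsplit : ∑ j, (lam j - μ) * (c j)^2 = ∑ j ∈ Tᶜ, (lam j - μ) * (c j)^2 :=
      (Finset.sum_subset (Finset.subset_univ _) (fun x _ hx => by
        rw [(hTmem x).mp (by simpa using hx)]; ring)).symm
    have hlower : ∑ j ∈ Tᶜ, s * (c j)^2 ≤ ∑ j ∈ Tᶜ, (lam j - μ) * (c j)^2 := by
      apply Finset.sum_le_sum
      intro j hj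
      have : μ' ≤ lam j := Finset.inf'_le _ hj
      have := sq_nonneg (c j)
      nlinarith
    have hfin : s * (v (Sum.inl ()))^2 ≤ ∑ j, (lam j - μ) * (c j)^2 := by
      calc s * (v (Sum.inl ()))^2 ≤ s * ∑ j ∈ Tᶜ, (c j)^2 :=
            mul_le_mul_of_nonneg_left hCS (by linarith)
        _ = ∑ j ∈ Tᶜ, s * (c j)^2 := Finset.mul_sum _ _ _
        _ ≤ ∑ j ∈ Tᶜ, (lam j - μ) * (c j)^2 := hlower
        _ = ∑ j, (lam j - μ) * (c j)^2 := hsplit.symm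
    have hexp : ∑ j, (lam j - μ) * (c j)^2
        = (∑ j, lam j * (c j)^2) - μ * ∑ j, (c j)^2 := by
      rw [Finset.mul_sum, ← Finset.sum_sub_distrib]
      apply Finset.sum_congr rfl
      intro j _; ring
    rw [hquad', h1, h2]
    rw [hexp] at hfin
    linarith
  have hD' : (borderD A a' (t - s)).IsHermitian := borderD_isHermitian A a' (t - s) hA
  obtain ⟨u, hu0, huu⟩ := lambdaMin_mem hD'
  have hupos : 0 < u ⬝ᵥ u := by
    rcases lt_or_eq_of_le (Finset.sum_nonneg fun i _ => mul_self_nonneg (u i)) with h | h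
    · exact h
    · exact absurd (dotProduct_self_eq_zero.mp h.symm) hu0
  have := hkey u
  rw [huu, dotProduct_smul, smul_eq_mul] at this
  exact le_of_mul_le_mul_right (by linarith) hupos

end main3

section main4
variable {n : ℕ} {A : Matrix (Fin n) (Fin n) ℝ}

noncomputable def embL (n : ℕ) : (Fin n → ℝ) →ₗ[ℝ] (Unit ⊕ Fin n → ℝ) where
  toFun q := Sum.elim (fun _ => 0) q
  map_add' x y := by funext j; cases j <;> simp
  map_smul' c x := by funext j; cases j <;> simp

set_option maxHeartbeats 1000000 in
set_option synthInstance.maxHeartbeats 400000 in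
lemma dim_count (hn : 1 ≤ n) (hA : A.IsHermitian) (a' : Fin n → ℝ) (t : ℝ)
    (heq : lambdaMin (borderD A a' t) = lambdaMin A)
    {w : Unit ⊕ Fin n → ℝ} (hw : (borderD A a' t) *ᵥ w = lambdaMin A • w)
    (hw0 : w (Sum.inl ()) ≠ 0)
    (horth : ∀ q : Fin n → ℝ, A *ᵥ q = lambdaMin A • q → a' ⬝ᵥ q = 0) :
    Module.finrank ℝ (LinearMap.ker
        ((borderD A a' t) - lambdaMin (borderD A a' t) • 1).mulVecLin)
      = Module.finrank ℝ (LinearMap.ker (A - lambdaMin A • 1).mulVecLin) + 1 := by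
  classical
  rw [heq]
  set μ := lambdaMin A with hμ
  set D := borderD A a' t with hDdef
  set K := LinearMap.ker (D - μ • 1).mulVecLin with hK
  set KA := LinearMap.ker (A - μ • 1).mulVecLin with hKA
  set π : K →ₗ[ℝ] ℝ := (LinearMap.proj (Sum.inl ())).comp K.subtype with hπ
  -- range π = ⊤
  have hsurj : LinearMap.range π = ⊤ := by
    rw [LinearMap.range_eq_top]
    intro r
    have hmem : (r * (w (Sum.inl ()))⁻¹) • w ∈ K := by
      apply mem_eigKer.mpr
      rw [mulVec_smul, hw, smul_comm]
    refine ⟨⟨_, hmem⟩, ?_⟩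
    show ((r * (w (Sum.inl ()))⁻¹) • w) (Sum.inl ()) = r
    simp only [Pi.smul_apply, smul_eq_mul]
    field_simp
  have hrange : Module.finrank ℝ (LinearMap.range π) = 1 := by
    rw [hsurj, finrank_top, Module.finrank_self]
  -- kernel of π ≃ KA
  have hker : Module.finrank ℝ (LinearMap.ker π) = Module.finrank ℝ KA := by
    -- ψ : ker π → KA
    have hψmem : ∀ x : LinearMap.ker π,
        (((x : K) : Unit ⊕ Fin n → ℝ) ∘ Sum.inr) ∈ KA := by
      intro x
      have hx0 : ((x : K) : Unit ⊕ Fin n → ℝ) (Sum.inl ()) = 0 := x.2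
      have hxK : D *ᵥ ((x : K) : Unit ⊕ Fin n → ℝ)
          = μ • ((x : K) : Unit ⊕ Fin n → ℝ) := mem_eigKer.mp (x : K).2
      apply mem_eigKer.mpr
      funext i
      have := congrFun hxK (Sum.inr i)
      rw [hDdef, borderD_mulVec_inr, hx0] at this
      simpa using this
    let ψ : LinearMap.ker π →ₗ[ℝ] KA :=
      LinearMap.codRestrict KA
        ((LinearMap.funLeft ℝ ℝ Sum.inr).comp (K.subtype.comp (LinearMap.ker π).subtype))
        hψmem
    have hψinj : Function.Injective ψ := by
      rw [injective_iff_map_eq_zero]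
      intro x hx
      have htail : ∀ i, ((x : K) : Unit ⊕ Fin n → ℝ) (Sum.inr i) = 0 := by
        intro i
        exact congrFun (congrArg Subtype.val hx) i
      have hx0 : ((x : K) : Unit ⊕ Fin n → ℝ) (Sum.inl ()) = 0 := x.2
      apply Subtype.ext; apply Subtype.ext
      funext j
      cases j with
      | inl u => cases u; exact hx0
      | inr i => exact htail i
    -- φ : KA → ker π
    have hφmemK : ∀ q : KA, (embL n) (q : Fin n → ℝ) ∈ K := by
      intro q
      have hq : A *ᵥ (q : Fin n → ℝ) = μ • (q : Fin n → ℝ) := mem_eigKer.mp q.2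
      apply mem_eigKer.mpr
      funext j
      cases j with
      | inl u =>
        cases u
        rw [hDdef, borderD_mulVec_inl]
        have h1 : (embL n) (q : Fin n → ℝ) (Sum.inl ()) = 0 := rfl
        have h2 : ((embL n) (q : Fin n → ℝ)) ∘ Sum.inr = (q : Fin n → ℝ) := rfl
        have h3 : (μ • (embL n) (q : Fin n → ℝ)) (Sum.inl ()) = 0 := by
          rw [Pi.smul_apply, h1, smul_zero]
        rw [h1, h2, horth _ hq, h3]
        ring
      | inr i =>
        rw [hDdef, borderD_mulVec_inr]
        have h1 : (embL n) (q : Fin n → ℝ) (Sum.inl ()) = 0 := rfl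
        have h2 : ((embL n) (q : Fin n → ℝ)) ∘ Sum.inr = (q : Fin n → ℝ) := rfl
        rw [h1, h2, hq]
        simp [embL]
    have hφmemker : ∀ q : KA,
        LinearMap.codRestrict K ((embL n).comp KA.subtype) hφmemK q ∈ LinearMap.ker π := by
      intro q
      rw [LinearMap.mem_ker]
      rfl
    let φ : KA →ₗ[ℝ] LinearMap.ker π :=
      LinearMap.codRestrict (LinearMap.ker π)
        (LinearMap.codRestrict K ((embL n).comp KA.subtype) hφmemK) hφmemker
    have hφinj : Function.Injective φ := by
      rw [injective_iff_map_eq_zero]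
      intro q hq
      apply Subtype.ext
      funext i
      have := congrFun (congrArg Subtype.val (congrArg Subtype.val hq)) (Sum.inr i)
      exact this
    exact le_antisymm (ψ.finrank_le_finrank_of_injective hψinj)
      (φ.finrank_le_finrank_of_injective hφinj)
  have hrn := π.finrank_range_add_finrank_ker
  rw [hrange, hker] at hrn
  omega

end main4

/-- Lemma 1, part 1. -/
theorem stmt8 {n : ℕ} (hn : 1 ≤ n) (A : Matrix (Fin n) (Fin n) ℝ) (hA : A.IsHermitian)
    (hnpd : ¬ A.PosDef) (a b : Fin n → ℝ) (c Δ : ℝ) (hΔ : 0 < Δ)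
    (ts ls : ℝ) (hls : 0 ≤ ls)
    (hmax : ∀ t l : ℝ, 0 ≤ l → ktl A a b c Δ t l ≤ ktl A a b c Δ ts ls) :
    (lambdaMin (borderD2 A a b ts ls) < lambdaMin A →
      eigMult (borderD2 A a b ts ls) = 1) ∧
    (lambdaMin (borderD2 A a b ts ls) = lambdaMin A →
      eigMult (borderD2 A a b ts ls) = eigMult A + 1) := by
  haveI : Nonempty (Fin n) := ⟨⟨0, hn⟩⟩
  set a' : Fin n → ℝ := fun j => a j - (ls / 2) * b j with ha'
  have e : ∀ t : ℝ, borderD2 A a b t ls = borderD A a' t := fun _ => rfl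
  constructor
  · intro hlt
    rw [e ts] at hlt ⊢
    unfold eigMult
    exact part1 hn hA a' ts hlt
  · intro heql
    rw [e ts] at heql ⊢
    have horth : ∀ q : Fin n → ℝ, A *ᵥ q = lambdaMin A • q → a' ⬝ᵥ q = 0 :=
      fun q hq => orth_of_eq hn hA a' ts heql hq
    have hex : ∃ w : Unit ⊕ Fin n → ℝ,
        borderD A a' ts *ᵥ w = lambdaMin A • w ∧ w (Sum.inl ()) ≠ 0 := by
      by_contra hno
      push_neg at hno
      obtain ⟨s, hs, hle⟩ := gap_lemma hA a' ts
        (fun w hw => hno w (by rw [← heql]; exact hw))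
      have hcontr := hmax (ts - s) ls hls
      unfold ktl at hcontr
      rw [e (ts - s), e ts, heql] at hcontr
      nlinarith [mul_le_mul_of_nonneg_left hle (by linarith : (0:ℝ) ≤ Δ + 1)]
    obtain ⟨w, hw, hw0⟩ := hex
    unfold eigMult
    exact dim_count hn hA a' ts heql hw hw0 horth
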